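/- Suppose x* ∈ ℝ^d satisfies ∇H(x*) = 0 and H(x*) = min H, that H is μ-quasi-strongly convex with respect to x* for some μ > 0, and that expected smoothness holds with constant ℒ > 0: (1/n²)∑_{i,j=1}^n ‖∇H_{i,j}(x) − ∇H_{i,j}(x*)‖² ≤ 2ℒ(H(x) − H(x*)) for all x ∈ ℝ^d. Set σ² = (1/n²)∑_{i,j=1}^n ‖∇H_{i,j}(x*)‖². Then for any constant step size γ^k ≡ γ ∈ (0, 1/(2ℒ)], the SHGD iterates satisfy E‖x^k − x*‖² ≤ (1 − γμ)^k ‖x⁰ − x*‖² + 2γσ²/μ for all k ≥ 0. -/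

import Mathlib

/-!
STATEMENT 6: SHGD with constant step size γ ∈ (0, 1/(2ℒ)] under quasi-strong convexity
and expected smoothness: E‖x^k − x*‖² ≤ (1 − γμ)^k ‖x⁰ − x*‖² + 2γσ²/μ.
-/

open scoped RealInnerProductSpace BigOperators

set_option maxHeartbeats 1000000
set_option maxHeartbeats 1000000
noncomputable section

variable {n d1 d2 : ℕ}

/-- The signed gradient field ξᵢ(x) = (∇_{x1} gᵢ(x), −∇_{x2} gᵢ(x)). -/
def xi (g : EuclideanSpace ℝ (Fin d1 ⊕ Fin d2) → ℝ)
    (x : EuclideanSpace ℝ (Fin d1 ⊕ Fin d2)) : EuclideanSpace ℝ (Fin d1 ⊕ Fin d2) :=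
  (WithLp.equiv 2 _).symm (Sum.elim
    (fun a => gradient g x (Sum.inl a))
    (fun j => -(gradient g x (Sum.inr j))))

/-- The Hamiltonian component H_{i,j}(x) = ½⟨ξᵢ(x), ξⱼ(x)⟩. -/
def HamComp (g : Fin n → EuclideanSpace ℝ (Fin d1 ⊕ Fin d2) → ℝ) (i j : Fin n)
    (x : EuclideanSpace ℝ (Fin d1 ⊕ Fin d2)) : ℝ :=
  (1 / 2 : ℝ) * ⟪xi (g i) x, xi (g j) x⟫

/-- The Hamiltonian H(x) = ½‖(1/n)∑ᵢξᵢ(x)‖². -/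
def Ham (g : Fin n → EuclideanSpace ℝ (Fin d1 ⊕ Fin d2) → ℝ)
    (x : EuclideanSpace ℝ (Fin d1 ⊕ Fin d2)) : ℝ :=
  (1 / 2 : ℝ) * ‖(n : ℝ)⁻¹ • ∑ i, xi (g i) x‖ ^ 2

/-- `shgdExp g γ t k φ x` is the expectation E[φ(x^{t+k}) | x^t = x] for the SHGD
iteration x^{m+1} = x^m − γ^m ∇H_{i_m,j_m}(x^m) with (i_m, j_m) i.i.d. uniform on
{1,…,n}².  In particular `shgdExp g γ 0 k φ x⁰ = E[φ(x^k)]`. -/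
def shgdExp (g : Fin n → EuclideanSpace ℝ (Fin d1 ⊕ Fin d2) → ℝ) (γ : ℕ → ℝ) :
    ℕ → ℕ → (EuclideanSpace ℝ (Fin d1 ⊕ Fin d2) → ℝ) →
      EuclideanSpace ℝ (Fin d1 ⊕ Fin d2) → ℝ
  | _, 0, φ => φ
  | t, k + 1, φ => fun x => ((n : ℝ) ^ 2)⁻¹ * ∑ i, ∑ j,
      shgdExp g γ (t + 1) k φ (x - γ t • gradient (HamComp g i j) x)

def negL : EuclideanSpace ℝ (Fin d1 ⊕ Fin d2) →L[ℝ] EuclideanSpace ℝ (Fin d1 ⊕ Fin d2) :=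
  LinearMap.toContinuousLinearMap
  { toFun := fun v => (WithLp.equiv 2 _).symm (Sum.elim
      (fun a => v (Sum.inl a)) (fun j => -(v (Sum.inr j))))
    map_add' := by intro v w; ext s; cases s <;> simp <;> ring
    map_smul' := by intro c v; ext s; cases s <;> simp }

lemma xi_eq (g : EuclideanSpace ℝ (Fin d1 ⊕ Fin d2) → ℝ) (x) :
    xi g x = negL (gradient g x) := rfl

lemma gradient_differentiable {g : EuclideanSpace ℝ (Fin d1 ⊕ Fin d2) → ℝ}
    (hg : ContDiff ℝ 2 g) : Differentiable ℝ (gradient g) := by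
  have h1 : Differentiable ℝ (fderiv ℝ g) :=
    (hg.fderiv_right (m := 1) (by norm_num)).differentiable (by norm_num)
  exact fun x => ((InnerProductSpace.toDual ℝ
    (EuclideanSpace ℝ (Fin d1 ⊕ Fin d2))).symm.toContinuousLinearEquiv.differentiable.comp h1) x

lemma xi_differentiable {g : EuclideanSpace ℝ (Fin d1 ⊕ Fin d2) → ℝ}
    (hg : ContDiff ℝ 2 g) : Differentiable ℝ (xi g) := by
  have := negL.differentiable.comp (gradient_differentiable hg)
  exact this

lemma hamComp_differentiable {g : Fin n → EuclideanSpace ℝ (Fin d1 ⊕ Fin d2) → ℝ}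
    (hg : ∀ i, ContDiff ℝ 2 (g i)) (i j : Fin n) :
    Differentiable ℝ (HamComp g i j) := by
  have h1 := xi_differentiable (hg i)
  have h2 := xi_differentiable (hg j)
  exact fun x => ((h1 x).inner ℝ (h2 x)).const_mul _

lemma Ham_eq_avg (g : Fin n → EuclideanSpace ℝ (Fin d1 ⊕ Fin d2) → ℝ)
    (x : EuclideanSpace ℝ (Fin d1 ⊕ Fin d2)) :
    Ham g x = ((n : ℝ) ^ 2)⁻¹ * ∑ i, ∑ j, HamComp g i j x := by
  unfold Ham HamComp
  rw [norm_smul, mul_pow, ← real_inner_self_eq_norm_sq (∑ i, xi (g i) x), inner_sum]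
  simp_rw [sum_inner, Finset.mul_sum]
  rw [Finset.sum_comm]
  refine Finset.sum_congr rfl fun i _ => Finset.sum_congr rfl fun j _ => ?_
  have hnn : ‖((n : ℝ))⁻¹‖ = (n : ℝ)⁻¹ := by
    rw [Real.norm_eq_abs, abs_of_nonneg (by positivity)]
  rw [hnn, real_inner_comm]
  ring

lemma gradient_Ham_eq (g : Fin n → EuclideanSpace ℝ (Fin d1 ⊕ Fin d2) → ℝ)
    (hg : ∀ i, ContDiff ℝ 2 (g i)) (x : EuclideanSpace ℝ (Fin d1 ⊕ Fin d2)) :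
    gradient (Ham g) x = ((n : ℝ) ^ 2)⁻¹ • ∑ i, ∑ j, gradient (HamComp g i j) x := by
  have hF : HasGradientAt (Ham g) (((n : ℝ) ^ 2)⁻¹ • ∑ i, ∑ j, gradient (HamComp g i j) x) x := by
    have h1 : ∀ i j : Fin n, HasGradientAt (HamComp g i j) (gradient (HamComp g i j) x) x :=
      fun i j => (hamComp_differentiable hg i j x).hasGradientAt
    have h2 : ∀ i j : Fin n, HasFDerivAt (HamComp g i j)
        (InnerProductSpace.toDual ℝ _ (gradient (HamComp g i j) x)) x :=
      fun i j => (h1 i j).hasFDerivAt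
    have h3 : HasFDerivAt (fun y => ∑ i, ∑ j, HamComp g i j y)
        (∑ i, ∑ j, InnerProductSpace.toDual ℝ _ (gradient (HamComp g i j) x)) x := by
      apply HasFDerivAt.fun_sum; intro i _; exact HasFDerivAt.fun_sum (fun j _ => h2 i j)
    have h4 : HasFDerivAt (Ham g)
        (((n : ℝ) ^ 2)⁻¹ • ∑ i, ∑ j, InnerProductSpace.toDual ℝ _ (gradient (HamComp g i j) x)) x := by
      have : Ham g = fun y => ((n : ℝ) ^ 2)⁻¹ • ∑ i, ∑ j, HamComp g i j y := by
        funext y; simpa [smul_eq_mul] using Ham_eq_avg g y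
      rw [this]
      exact h3.const_smul (((n : ℝ) ^ 2)⁻¹)
    rw [hasGradientAt_iff_hasFDerivAt]
    refine h4.congr_fderiv (Eq.symm ?_)
    rw [map_smul, map_sum]
    congr 1
    refine Finset.sum_congr rfl fun i _ => ?_
    rw [map_sum]
  exact hF.gradient

section Main
variable {g : Fin n → EuclideanSpace ℝ (Fin d1 ⊕ Fin d2) → ℝ}
variable {xstar : EuclideanSpace ℝ (Fin d1 ⊕ Fin d2)}

lemma one_step (hn : 0 < n)
    (hg : ∀ i, ContDiff ℝ 2 (g i))
    (hmin : ∀ y, Ham g xstar ≤ Ham g y)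
    {μ : ℝ} (hμ : 0 < μ)
    (hqsc : ∀ x, Ham g x + ⟪gradient (Ham g) x, xstar - x⟫ + μ / 2 * ‖xstar - x‖ ^ 2
      ≤ Ham g xstar)
    {ℒ : ℝ} (hℒ : 0 < ℒ)
    (hES : ∀ x, ((n : ℝ) ^ 2)⁻¹ *
        ∑ i, ∑ j, ‖gradient (HamComp g i j) x - gradient (HamComp g i j) xstar‖ ^ 2
      ≤ 2 * ℒ * (Ham g x - Ham g xstar))
    {σ2 : ℝ}
    (hσ2 : σ2 = ((n : ℝ) ^ 2)⁻¹ * ∑ i, ∑ j, ‖gradient (HamComp g i j) xstar‖ ^ 2)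
    {γ : ℝ} (hγ0 : 0 < γ) (hγ : γ ≤ 1 / (2 * ℒ))
    (x : EuclideanSpace ℝ (Fin d1 ⊕ Fin d2)) :
    ((n : ℝ) ^ 2)⁻¹ * ∑ i, ∑ j, ‖x - γ • gradient (HamComp g i j) x - xstar‖ ^ 2
      ≤ (1 - γ * μ) * ‖x - xstar‖ ^ 2 + 2 * γ ^ 2 * σ2 := by
  set v : Fin n → Fin n → EuclideanSpace ℝ (Fin d1 ⊕ Fin d2) :=
    fun i j => gradient (HamComp g i j) x with hv
  set N : ℝ := (n : ℝ) ^ 2 with hN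
  have hNpos : (0 : ℝ) < N := by positivity
  set t2 : ℝ := ‖x - xstar‖ ^ 2 with ht2
  set S1 : ℝ := ∑ i, ∑ j, ⟪x - xstar, v i j⟫ with hS1
  set S2 : ℝ := ∑ i, ∑ j, ‖v i j‖ ^ 2 with hS2
  have f1 : ∑ i, ∑ j, ‖x - γ • v i j - xstar‖ ^ 2 = N * t2 - 2 * γ * S1 + γ ^ 2 * S2 := by
    have hterm : ∀ i j : Fin n, ‖x - γ • v i j - xstar‖ ^ 2
        = t2 - 2 * γ * ⟪x - xstar, v i j⟫ + γ ^ 2 * ‖v i j‖ ^ 2 := by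
      intro i j
      rw [sub_right_comm, norm_sub_sq_real, real_inner_smul_right, norm_smul]
      simp only [Real.norm_eq_abs]
      rw [mul_pow, sq_abs]
      ring
    rw [hS1, hS2]
    simp_rw [hterm, Finset.sum_add_distrib, Finset.sum_sub_distrib, Finset.sum_const,
      Finset.card_univ, Fintype.card_fin, ← Finset.mul_sum, nsmul_eq_mul]
    push_cast [hN]
    ring
  have f2 : ⟪x - xstar, gradient (Ham g) x⟫ = N⁻¹ * S1 := by
    rw [gradient_Ham_eq g hg x, real_inner_smul_right]
    congr 1
    rw [hS1, inner_sum]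
    exact Finset.sum_congr rfl fun i _ => by rw [inner_sum]
  have f3 : N⁻¹ * S2 ≤ 4 * ℒ * (Ham g x - Ham g xstar) + 2 * σ2 := by
    have hptw : ∀ i j : Fin n, ‖v i j‖ ^ 2
        ≤ 2 * ‖v i j - gradient (HamComp g i j) xstar‖ ^ 2
          + 2 * ‖gradient (HamComp g i j) xstar‖ ^ 2 := by
      intro i j
      have h1 : ‖v i j‖ ≤ ‖v i j - gradient (HamComp g i j) xstar‖
          + ‖gradient (HamComp g i j) xstar‖ := by
        simpa using norm_add_le (v i j - gradient (HamComp g i j) xstar)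
          (gradient (HamComp g i j) xstar)
      have h2 : ‖v i j‖ ^ 2 ≤ (‖v i j - gradient (HamComp g i j) xstar‖
          + ‖gradient (HamComp g i j) xstar‖) ^ 2 :=
        pow_le_pow_left₀ (norm_nonneg _) h1 2
      nlinarith [sq_nonneg (‖v i j - gradient (HamComp g i j) xstar‖
        - ‖gradient (HamComp g i j) xstar‖)]
    have hsum : S2 ≤ 2 * (∑ i, ∑ j, ‖v i j - gradient (HamComp g i j) xstar‖ ^ 2)
        + 2 * (∑ i, ∑ j, ‖gradient (HamComp g i j) xstar‖ ^ 2) := by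
      rw [hS2, Finset.mul_sum, Finset.mul_sum, ← Finset.sum_add_distrib]
      refine Finset.sum_le_sum fun i _ => ?_
      rw [Finset.mul_sum, Finset.mul_sum, ← Finset.sum_add_distrib]
      exact Finset.sum_le_sum fun j _ => hptw i j
    have hES' := hES x
    have := mul_le_mul_of_nonneg_left hsum (le_of_lt (inv_pos.mpr hNpos))
    calc N⁻¹ * S2 ≤ N⁻¹ * (2 * (∑ i, ∑ j, ‖v i j - gradient (HamComp g i j) xstar‖ ^ 2)
        + 2 * (∑ i, ∑ j, ‖gradient (HamComp g i j) xstar‖ ^ 2)) := this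
      _ = 2 * (N⁻¹ * ∑ i, ∑ j, ‖v i j - gradient (HamComp g i j) xstar‖ ^ 2) + 2 * σ2 := by
          rw [hσ2]; ring
      _ ≤ 2 * (2 * ℒ * (Ham g x - Ham g xstar)) + 2 * σ2 := by
          have : N⁻¹ * ∑ i, ∑ j, ‖v i j - gradient (HamComp g i j) xstar‖ ^ 2
              ≤ 2 * ℒ * (Ham g x - Ham g xstar) := hES'
          linarith
      _ = 4 * ℒ * (Ham g x - Ham g xstar) + 2 * σ2 := by ring
  have f4 : Ham g x - Ham g xstar + μ / 2 * t2 ≤ ⟪x - xstar, gradient (Ham g) x⟫ := by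
    have h := hqsc x
    rw [show xstar - x = -(x - xstar) by abel, inner_neg_right, norm_neg, real_inner_comm] at h
    rw [ht2]
    linarith
  have ha : 0 ≤ Ham g x - Ham g xstar := by linarith [hmin x]
  have hσ2nn : 0 ≤ σ2 := by
    rw [hσ2]
    refine mul_nonneg (inv_nonneg.mpr hNpos.le) (Finset.sum_nonneg fun i _ =>
      Finset.sum_nonneg fun j _ => pow_nonneg (norm_nonneg _) 2)
  have hγℒ : 2 * γ * ℒ ≤ 1 := by
    rw [le_div_iff₀ (by positivity)] at hγ; linarith
  rw [f1]
  have hexp : N⁻¹ * (N * t2 - 2 * γ * S1 + γ ^ 2 * S2)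
      = t2 - 2 * γ * (N⁻¹ * S1) + γ ^ 2 * (N⁻¹ * S2) := by
    field_simp
  rw [hexp, ← f2]
  nlinarith [mul_le_mul_of_nonneg_left f3 (by positivity : (0:ℝ) ≤ γ ^ 2),
    mul_le_mul_of_nonneg_left f4 (by positivity : (0:ℝ) ≤ 2 * γ),
    mul_nonneg (mul_nonneg (by positivity : (0:ℝ) ≤ 2 * γ) ha) (by linarith : (0:ℝ) ≤ 1 - 2 * γ * ℒ)]

lemma mu_le_two_L (hn : 0 < n)
    (hg : ∀ i, ContDiff ℝ 2 (g i))
    (hcrit : gradient (Ham g) xstar = 0)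
    (hmin : ∀ y, Ham g xstar ≤ Ham g y)
    {μ : ℝ} (hμ : 0 < μ)
    (hqsc : ∀ x, Ham g x + ⟪gradient (Ham g) x, xstar - x⟫ + μ / 2 * ‖xstar - x‖ ^ 2
      ≤ Ham g xstar)
    {ℒ : ℝ} (hℒ : 0 < ℒ)
    (hES : ∀ x, ((n : ℝ) ^ 2)⁻¹ *
        ∑ i, ∑ j, ‖gradient (HamComp g i j) x - gradient (HamComp g i j) xstar‖ ^ 2
      ≤ 2 * ℒ * (Ham g x - Ham g xstar))
    (hne : Nonempty (Fin d1 ⊕ Fin d2)) : μ ≤ 2 * ℒ := by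
  obtain ⟨i0⟩ := hne
  set x : EuclideanSpace ℝ (Fin d1 ⊕ Fin d2) := xstar + EuclideanSpace.single i0 (1:ℝ) with hx
  have ht : ‖x - xstar‖ = 1 := by
    rw [hx]
    simp [EuclideanSpace.norm_single]
  set N : ℝ := (n : ℝ) ^ 2 with hN
  have hNpos : (0 : ℝ) < N := by positivity
  set a : ℝ := Ham g x - Ham g xstar with ha'
  have ha : 0 ≤ a := by have := hmin x; simp [ha']; linarith
  -- f4 : a + μ/2 ≤ ⟪x - xstar, ∇H x⟫
  have f4 : a + μ / 2 ≤ ⟪x - xstar, gradient (Ham g) x⟫ := by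
    have h := hqsc x
    rw [show xstar - x = -(x - xstar) by abel, inner_neg_right, norm_neg, real_inner_comm,
      ht, one_pow, mul_one] at h
    rw [ha']
    linarith
  -- Cauchy-Schwarz
  have fCS : ⟪x - xstar, gradient (Ham g) x⟫ ≤ ‖gradient (Ham g) x‖ := by
    have := real_inner_le_norm (x - xstar) (gradient (Ham g) x)
    rwa [ht, one_mul] at this
  -- G² ≤ 2ℒa
  have hzero : ∑ i, ∑ j, gradient (HamComp g i j) xstar = 0 := by
    have h := gradient_Ham_eq g hg xstar
    rw [hcrit] at h
    have := h.symm
    rwa [smul_eq_zero_iff_right (by positivity : ((n:ℝ)^2)⁻¹ ≠ 0)] at this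
  have hgradx : gradient (Ham g) x
      = N⁻¹ • ∑ i, ∑ j, (gradient (HamComp g i j) x - gradient (HamComp g i j) xstar) := by
    rw [gradient_Ham_eq g hg x, ← hN]
    congr 1
    simp only [Finset.sum_sub_distrib]
    rw [hzero, sub_zero]
  have hG2 : ‖gradient (Ham g) x‖ ^ 2 ≤ 2 * ℒ * a := by
    set d : Fin n → Fin n → EuclideanSpace ℝ (Fin d1 ⊕ Fin d2) :=
      fun i j => gradient (HamComp g i j) x - gradient (HamComp g i j) xstar with hd
    have h1 : ‖gradient (Ham g) x‖ ≤ N⁻¹ * ∑ i, ∑ j, ‖d i j‖ := by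
      rw [hgradx, norm_smul]
      have hnrm : ‖(N⁻¹ : ℝ)‖ = N⁻¹ := by
        rw [Real.norm_eq_abs, abs_of_nonneg (inv_nonneg.mpr hNpos.le)]
      rw [hnrm]
      refine mul_le_mul_of_nonneg_left ?_ (inv_nonneg.mpr hNpos.le)
      calc ‖∑ i, ∑ j, d i j‖ ≤ ∑ i, ‖∑ j, d i j‖ := norm_sum_le _ _
          _ ≤ ∑ i, ∑ j, ‖d i j‖ := Finset.sum_le_sum fun i _ => norm_sum_le _ _
    have h2 : (∑ i, ∑ j, ‖d i j‖) ^ 2 ≤ N * ∑ i, ∑ j, ‖d i j‖ ^ 2 := by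
      have hc1 : (∑ i, ∑ j, ‖d i j‖) ^ 2
          ≤ (n : ℝ) * ∑ i, (∑ j, ‖d i j‖) ^ 2 := by
        have := sq_sum_le_card_mul_sum_sq
          (s := (Finset.univ : Finset (Fin n))) (f := fun i => ∑ j, ‖d i j‖)
        simpa using this
      have hc2 : ∀ i : Fin n, (∑ j, ‖d i j‖) ^ 2 ≤ (n : ℝ) * ∑ j, ‖d i j‖ ^ 2 := by
        intro i
        have := sq_sum_le_card_mul_sum_sq
          (s := (Finset.univ : Finset (Fin n))) (f := fun j => ‖d i j‖)
        simpa using this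
      calc (∑ i, ∑ j, ‖d i j‖) ^ 2 ≤ (n : ℝ) * ∑ i, (∑ j, ‖d i j‖) ^ 2 := hc1
        _ ≤ (n : ℝ) * ∑ i, ((n : ℝ) * ∑ j, ‖d i j‖ ^ 2) := by
            have hsum := Finset.sum_le_sum fun i (_ : i ∈ Finset.univ) => hc2 i
            exact mul_le_mul_of_nonneg_left hsum (n.cast_nonneg)
        _ = N * ∑ i, ∑ j, ‖d i j‖ ^ 2 := by
            rw [← Finset.mul_sum, hN]; ring
    have h3 : ‖gradient (Ham g) x‖ ^ 2 ≤ (N⁻¹ * ∑ i, ∑ j, ‖d i j‖) ^ 2 := by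
      exact pow_le_pow_left₀ (norm_nonneg _) h1 2
    have h4 : (N⁻¹ * ∑ i, ∑ j, ‖d i j‖) ^ 2 = N⁻¹ * (N⁻¹ * (∑ i, ∑ j, ‖d i j‖) ^ 2) := by
      rw [mul_pow]; ring
    have h5 : N⁻¹ * (∑ i, ∑ j, ‖d i j‖) ^ 2 ≤ ∑ i, ∑ j, ‖d i j‖ ^ 2 := by
      rw [inv_mul_le_iff₀ hNpos]
      calc (∑ i, ∑ j, ‖d i j‖)^2 ≤ N * ∑ i, ∑ j, ‖d i j‖ ^ 2 := h2
        _ ≤ N * ∑ i, ∑ j, ‖d i j‖ ^ 2 := le_refl _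
    have hES' : N⁻¹ * ∑ i, ∑ j, ‖d i j‖ ^ 2 ≤ 2 * ℒ * a := by
      rw [ha']; simpa [hd] using hES x
    calc ‖gradient (Ham g) x‖ ^ 2 ≤ N⁻¹ * (N⁻¹ * (∑ i, ∑ j, ‖d i j‖) ^ 2) := by
          rw [← h4]; exact h3
      _ ≤ N⁻¹ * ∑ i, ∑ j, ‖d i j‖ ^ 2 :=
          mul_le_mul_of_nonneg_left h5 (inv_nonneg.mpr hNpos.le)
      _ ≤ 2 * ℒ * a := hES'
  -- combine
  have hA : a + μ / 2 ≤ ‖gradient (Ham g) x‖ := le_trans f4 fCS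
  have hsq : (a + μ / 2) ^ 2 ≤ 2 * ℒ * a := by
    calc (a + μ / 2) ^ 2 ≤ ‖gradient (Ham g) x‖ ^ 2 :=
        pow_le_pow_left₀ (by linarith) hA 2
      _ ≤ 2 * ℒ * a := hG2
  nlinarith [sq_nonneg a, mul_pos hμ hμ, mul_nonneg ha (sub_nonneg.mpr (le_refl μ))]

lemma iter_bound (hn : 0 < n) {γ μ σ2 : ℝ} (hσ2nn : 0 ≤ σ2)
    (hr0 : 0 ≤ 1 - γ * μ)
    (hstep : ∀ x : EuclideanSpace ℝ (Fin d1 ⊕ Fin d2),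
      ((n : ℝ) ^ 2)⁻¹ * ∑ i, ∑ j, ‖x - γ • gradient (HamComp g i j) x - xstar‖ ^ 2
        ≤ (1 - γ * μ) * ‖x - xstar‖ ^ 2 + 2 * γ ^ 2 * σ2) :
    ∀ (k t : ℕ) (x : EuclideanSpace ℝ (Fin d1 ⊕ Fin d2)),
      shgdExp g (fun _ => γ) t k (fun y => ‖y - xstar‖ ^ 2) x
        ≤ (1 - γ * μ) ^ k * ‖x - xstar‖ ^ 2
          + 2 * γ ^ 2 * σ2 * ∑ m ∈ Finset.range k, (1 - γ * μ) ^ m := by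
  intro k
  induction k with
  | zero => intro t x; simp [shgdExp]
  | succ k ih =>
    intro t x
    set r : ℝ := 1 - γ * μ with hr
    have hNpos : (0 : ℝ) < (n : ℝ) ^ 2 := by positivity
    have hrk : (0:ℝ) ≤ r ^ k := pow_nonneg hr0 k
    rw [show shgdExp g (fun _ => γ) t (k+1) (fun y => ‖y - xstar‖ ^ 2) x
      = ((n : ℝ) ^ 2)⁻¹ * ∑ i, ∑ j, shgdExp g (fun _ => γ) (t+1) k (fun y => ‖y - xstar‖ ^ 2)
          (x - γ • gradient (HamComp g i j) x) from rfl]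
    have hsum1 : ∑ i, ∑ j, shgdExp g (fun _ => γ) (t+1) k (fun y => ‖y - xstar‖ ^ 2)
          (x - γ • gradient (HamComp g i j) x)
        ≤ ∑ i, ∑ j, (r ^ k * ‖x - γ • gradient (HamComp g i j) x - xstar‖ ^ 2
          + 2 * γ ^ 2 * σ2 * ∑ m ∈ Finset.range k, r ^ m) :=
      Finset.sum_le_sum fun i _ => Finset.sum_le_sum fun j _ => ih (t+1) _
    have hsum2 : ((n : ℝ) ^ 2)⁻¹ * ∑ i, ∑ j,
          (r ^ k * ‖x - γ • gradient (HamComp g i j) x - xstar‖ ^ 2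
            + 2 * γ ^ 2 * σ2 * ∑ m ∈ Finset.range k, r ^ m)
        = r ^ k * (((n : ℝ) ^ 2)⁻¹ * ∑ i, ∑ j, ‖x - γ • gradient (HamComp g i j) x - xstar‖ ^ 2)
          + 2 * γ ^ 2 * σ2 * ∑ m ∈ Finset.range k, r ^ m := by
      simp_rw [Finset.sum_add_distrib, Finset.sum_const, Finset.card_univ, Fintype.card_fin,
        nsmul_eq_mul, ← Finset.mul_sum]
      field_simp
    have step := hstep x
    calc ((n : ℝ) ^ 2)⁻¹ * ∑ i, ∑ j, shgdExp g (fun _ => γ) (t+1) k (fun y => ‖y - xstar‖ ^ 2)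
          (x - γ • gradient (HamComp g i j) x)
        ≤ ((n : ℝ) ^ 2)⁻¹ * ∑ i, ∑ j,
            (r ^ k * ‖x - γ • gradient (HamComp g i j) x - xstar‖ ^ 2
              + 2 * γ ^ 2 * σ2 * ∑ m ∈ Finset.range k, r ^ m) :=
          mul_le_mul_of_nonneg_left hsum1 (inv_nonneg.mpr hNpos.le)
      _ = r ^ k * (((n : ℝ) ^ 2)⁻¹ * ∑ i, ∑ j, ‖x - γ • gradient (HamComp g i j) x - xstar‖ ^ 2)
            + 2 * γ ^ 2 * σ2 * ∑ m ∈ Finset.range k, r ^ m := hsum2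
      _ ≤ r ^ k * (r * ‖x - xstar‖ ^ 2 + 2 * γ ^ 2 * σ2)
            + 2 * γ ^ 2 * σ2 * ∑ m ∈ Finset.range k, r ^ m := by
          have := mul_le_mul_of_nonneg_left step hrk
          linarith
      _ = r ^ (k+1) * ‖x - xstar‖ ^ 2 + 2 * γ ^ 2 * σ2 * ∑ m ∈ Finset.range (k+1), r ^ m := by
          rw [Finset.sum_range_succ]
          ring

end Main

theorem shgd_constant_stepsize
    (hn : 0 < n) (g : Fin n → EuclideanSpace ℝ (Fin d1 ⊕ Fin d2) → ℝ)
    (hg : ∀ i, ContDiff ℝ 2 (g i))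
    (xstar : EuclideanSpace ℝ (Fin d1 ⊕ Fin d2))
    (hcrit : gradient (Ham g) xstar = 0)
    (hmin : ∀ y, Ham g xstar ≤ Ham g y)
    (μ : ℝ) (hμ : 0 < μ)
    -- quasi-strong convexity of H with respect to x*
    (hqsc : ∀ x, Ham g x + ⟪gradient (Ham g) x, xstar - x⟫ + μ / 2 * ‖xstar - x‖ ^ 2
      ≤ Ham g xstar)
    (ℒ : ℝ) (hℒ : 0 < ℒ)
    -- expected smoothness
    (hES : ∀ x, ((n : ℝ) ^ 2)⁻¹ *
        ∑ i, ∑ j, ‖gradient (HamComp g i j) x - gradient (HamComp g i j) xstar‖ ^ 2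
      ≤ 2 * ℒ * (Ham g x - Ham g xstar))
    (σ2 : ℝ)
    (hσ2 : σ2 = ((n : ℝ) ^ 2)⁻¹ * ∑ i, ∑ j, ‖gradient (HamComp g i j) xstar‖ ^ 2)
    (γ : ℝ) (hγ0 : 0 < γ) (hγ : γ ≤ 1 / (2 * ℒ))
    (x0 : EuclideanSpace ℝ (Fin d1 ⊕ Fin d2)) :
    ∀ k : ℕ, shgdExp g (fun _ => γ) 0 k (fun x => ‖x - xstar‖ ^ 2) x0
      ≤ (1 - γ * μ) ^ k * ‖x0 - xstar‖ ^ 2 + 2 * γ * σ2 / μ := by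
  intro k
  have hNpos : (0 : ℝ) < (n : ℝ) ^ 2 := by positivity
  have hσ2nn : 0 ≤ σ2 := by
    rw [hσ2]
    exact mul_nonneg (inv_nonneg.mpr hNpos.le) (Finset.sum_nonneg fun i _ =>
      Finset.sum_nonneg fun j _ => pow_nonneg (norm_nonneg _) 2)
  rcases isEmpty_or_nonempty (Fin d1 ⊕ Fin d2) with he | hne
  · -- degenerate case: the space is a single point
    have hsub : ∀ y z : EuclideanSpace ℝ (Fin d1 ⊕ Fin d2), y = z := by
      intro y z
      ext i
      exact (he.false i).elim
    have hσ : σ2 = 0 := by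
      rw [hσ2]
      have hz : ∀ i j : Fin n, ‖gradient (HamComp g i j) xstar‖ ^ 2 = (0:ℝ) := by
        intro i j
        rw [show gradient (HamComp g i j) xstar = 0 from hsub _ 0]
        simp
      simp [hz]
    have hzero : ∀ (k t : ℕ) (x : EuclideanSpace ℝ (Fin d1 ⊕ Fin d2)),
        shgdExp g (fun _ => γ) t k (fun y => ‖y - xstar‖ ^ 2) x = 0 := by
      intro k
      induction k with
      | zero =>
        intro t x
        show ‖x - xstar‖ ^ 2 = 0
        rw [hsub x xstar, sub_self]
        simp
      | succ k ih =>
        intro t x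
        show ((n : ℝ) ^ 2)⁻¹ * ∑ i, ∑ j, shgdExp g (fun _ => γ) (t+1) k
          (fun y => ‖y - xstar‖ ^ 2) (x - γ • gradient (HamComp g i j) x) = 0
        simp [ih]
    rw [hzero k 0 x0, hσ, hsub x0 xstar, sub_self]
    simp
  · -- main case
    have hμ2ℒ : μ ≤ 2 * ℒ := mu_le_two_L hn hg hcrit hmin hμ hqsc hℒ hES hne
    have hγℒ : 2 * γ * ℒ ≤ 1 := by
      rw [le_div_iff₀ (by positivity)] at hγ; linarith
    have hγμ : γ * μ ≤ 1 := by nlinarith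
    have hr0 : 0 ≤ 1 - γ * μ := by linarith
    have hr1 : 1 - γ * μ < 1 := by nlinarith
    have hb := iter_bound hn hσ2nn hr0
      (fun x => one_step hn hg hmin hμ hqsc hℒ hES hσ2 hγ0 hγ x) k 0 x0
    refine hb.trans ?_
    have hgeo : ∑ m ∈ Finset.range k, (1 - γ * μ) ^ m ≤ 1 / (γ * μ) := by
      set r : ℝ := 1 - γ * μ with hr
      have hrne : r ≠ 1 := by rw [hr]; intro h; nlinarith
      rw [geom_sum_eq hrne k]
      have heq : (r ^ k - 1) / (r - 1) = (1 - r ^ k) / (1 - r) := by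
        rw [div_eq_div_iff (by intro h; apply hrne; linarith : r - 1 ≠ 0) ?_]
        · ring
        · intro h; apply hrne; linarith
      rw [heq, hr]
      have h1 : 1 - (1 - γ * μ) = γ * μ := by ring
      rw [h1]
      rw [div_le_div_iff₀ (by positivity) (by positivity)]
      nlinarith [pow_nonneg hr0 k]
    have h2 : 2 * γ ^ 2 * σ2 * (∑ m ∈ Finset.range k, (1 - γ * μ) ^ m)
        ≤ 2 * γ ^ 2 * σ2 * (1 / (γ * μ)) :=
      mul_le_mul_of_nonneg_left hgeo (by positivity)
    have h3 : 2 * γ ^ 2 * σ2 * (1 / (γ * μ)) = 2 * γ * σ2 / μ := by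
      field_simp
    linarith

end
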